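/- Let U be a neighborhood of the p-stratum of a realized stratified simplex over a flag J in a poset P, where the p-stratum is nonempty. Then there exists a continuous function φ : [0,1] → [0,1] with φ(s) > 0 for s > 0 such that every point x of the simplex with s_{¬<p}(x) > 0 and s_{¬≤p}(x) ≤ φ(s_{¬<p}(x)) lies in U. -/

import Mathlib

noncomputable section
open Finset Classical

/-- Membership in the standard `n`-simplex: nonnegative coordinates summing to `1`. -/
def IsSimplexPt {n : ℕ} (x : Fin (n + 1) → ℝ) : Prop :=
  (∀ i, 0 ≤ x i) ∧ ∑ i, x i = 1

/-- `s_p(x)`: sum of the coordinates of `x` at vertices labeled `p`. -/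
def sEq {n : ℕ} {P : Type*} [PartialOrder P] (L : Fin (n + 1) → P) (p : P)
    (x : Fin (n + 1) → ℝ) : ℝ :=
  ∑ i ∈ Finset.univ.filter (fun i => L i = p), x i

/-- `s_{≤p}(x)`: sum of the coordinates of `x` at vertices with label `≤ p`. -/
def sLe {n : ℕ} {P : Type*} [PartialOrder P] (L : Fin (n + 1) → P) (p : P)
    (x : Fin (n + 1) → ℝ) : ℝ :=
  ∑ i ∈ Finset.univ.filter (fun i => L i ≤ p), x i

/-- `s_{¬≤p}(x)`: sum of the coordinates of `x` at vertices whose label is not `≤ p`. -/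
def sNotLe {n : ℕ} {P : Type*} [PartialOrder P] (L : Fin (n + 1) → P) (p : P)
    (x : Fin (n + 1) → ℝ) : ℝ :=
  ∑ i ∈ Finset.univ.filter (fun i => ¬ L i ≤ p), x i

/-- `s_{¬<p}(x)`: sum of the coordinates of `x` at vertices whose label is not `< p`. -/
def sNotLt {n : ℕ} {P : Type*} [PartialOrder P] (L : Fin (n + 1) → P) (p : P)
    (x : Fin (n + 1) → ℝ) : ℝ :=
  ∑ i ∈ Finset.univ.filter (fun i => ¬ L i < p), x i

/-- The stratification of the realized simplex with monotone vertex labels `L`: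
`stratOf L x = max {L i : x i > 0}`, computed as the label of the largest index with
positive coordinate (for `x` in the simplex this is the supremum of the labels of the
positive coordinates, since `L` is monotone). -/
def stratOf {n : ℕ} {P : Type*} [PartialOrder P] (L : Fin (n + 1) → P)
    (x : Fin (n + 1) → ℝ) : P :=
  L ((Finset.univ.filter (fun i => 0 < x i)).sup id)

/-- If `U` is a neighborhood of the (nonempty) `p`-stratum of a realized stratified
simplex over a flag in a poset `P`, then there is a continuous `φ : [0,1] → [0,1]` with
`φ(s) > 0` for `s > 0`, such that every point `x` of the simplex with
`s_{¬<p}(x) > 0` and `s_{¬≤p}(x) ≤ φ(s_{¬<p}(x))` lies in `U`. -/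
theorem exists_phi_of_nhd {n : ℕ} {P : Type*} [PartialOrder P]
    (L : Fin (n + 1) → P) (hL : Monotone L) (p : P)
    (hne : {x : {x : Fin (n + 1) → ℝ // IsSimplexPt x} | stratOf L x.1 = p}.Nonempty)
    (U : Set {x : Fin (n + 1) → ℝ // IsSimplexPt x})
    (hU : U ∈ nhdsSet {x : {x : Fin (n + 1) → ℝ // IsSimplexPt x} | stratOf L x.1 = p}) :
    ∃ φ : ℝ → ℝ, ContinuousOn φ (Set.Icc 0 1) ∧
      (∀ s ∈ Set.Icc (0 : ℝ) 1, φ s ∈ Set.Icc (0 : ℝ) 1) ∧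
      (∀ s ∈ Set.Icc (0 : ℝ) 1, 0 < s → 0 < φ s) ∧
      ∀ x : {x : Fin (n + 1) → ℝ // IsSimplexPt x},
        0 < sNotLt L p x.1 → sNotLe L p x.1 ≤ φ (sNotLt L p x.1) → x ∈ U := by
  classical
  -- compactness of the simplex
  have hcomp : IsCompact {x : Fin (n + 1) → ℝ | IsSimplexPt x} := isCompact_stdSimplex ℝ (Fin (n + 1))
  haveI : CompactSpace {x : Fin (n + 1) → ℝ // IsSimplexPt x} :=
    isCompact_iff_compactSpace.mp hcomp
  set X := {x : Fin (n + 1) → ℝ // IsSimplexPt x}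
  obtain ⟨V, hVopen, hSV, hVU⟩ := mem_nhdsSet_iff_exists.mp hU
  set f : X → ℝ := fun x => sNotLt L p x.1 with hf_def
  set g : X → ℝ := fun x => sNotLe L p x.1 with hg_def
  have hfc : Continuous f := by
    apply continuous_finset_sum
    exact fun i _ => (continuous_apply i).comp continuous_subtype_val
  have hgc : Continuous g := by
    apply continuous_finset_sum
    exact fun i _ => (continuous_apply i).comp continuous_subtype_val
  have hg0 : ∀ x : X, 0 ≤ g x := fun x =>
    Finset.sum_nonneg fun i _ => x.2.1 i
  -- characterization of the stratum
  have hstrat : ∀ x : X, g x = 0 → 0 < f x → stratOf L x.1 = p := by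
    rintro ⟨x, hx⟩ hg hf
    have hzero : ∀ i, ¬ L i ≤ p → x i = 0 := by
      intro i hi
      exact (Finset.sum_eq_zero_iff_of_nonneg (fun j _ => hx.1 j)).mp hg i
        (by simp [hi])
    have hpos2 : ∀ i, 0 < x i → L i ≤ p := by
      intro i h
      by_contra hc
      rw [hzero i hc] at h
      exact lt_irrefl 0 h
    obtain ⟨i, hi, hxi⟩ :
        ∃ i ∈ Finset.univ.filter (fun i => ¬ L i < p), (0 : ℝ) < x i := by
      have h0 : ∑ j ∈ Finset.univ.filter (fun i => ¬ L i < p), (0 : ℝ) <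
          ∑ j ∈ Finset.univ.filter (fun i => ¬ L i < p), x j := by
        simpa [hf_def, sNotLt] using hf
      exact Finset.exists_lt_of_sum_lt h0
    have hnLi : ¬ L i < p := by simpa using (Finset.mem_filter.mp hi).2
    have hLi : L i = p := ((hpos2 i hxi).lt_or_eq).resolve_left hnLi
    set T := Finset.univ.filter (fun j => 0 < x j) with hT
    have hiT : i ∈ T := by simp [hT, hxi]
    obtain ⟨m, hmT, hms⟩ := Finset.exists_mem_eq_sup T ⟨i, hiT⟩ id
    have hxm : 0 < x m := by simpa [hT] using (Finset.mem_filter.mp hmT).2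
    have him : i ≤ m := by simpa [hms] using Finset.le_sup (f := id) hiT
    show L (T.sup id) = p
    rw [hms]
    exact le_antisymm (hpos2 m hxm) (hLi ▸ hL him)
  have hkey : ∀ x : X, x ∉ V → 0 < f x → 0 < g x := by
    intro x hxV hf
    rcases (hg0 x).lt_or_eq with h | h
    · exact h
    · exact absurd (hSV (hstrat x h.symm hf)) hxV
  by_cases hC : (Vᶜ : Set X).Nonempty
  · -- main case: complement of V is a nonempty compact set
    have hCc : IsCompact (Vᶜ : Set X) := hVopen.isClosed_compl.isCompact
    set h : ℝ → X → ℝ := fun t x => g x + |f x - t| with hh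
    set F : ℝ → ℝ := fun t => sInf (h t '' Vᶜ) with hF
    have hne' : ∀ t, (h t '' Vᶜ).Nonempty := fun t => hC.image _
    have hbdd : ∀ t, BddBelow (h t '' Vᶜ) := by
      intro t
      refine ⟨0, ?_⟩
      rintro y ⟨x, -, rfl⟩
      exact add_nonneg (hg0 x) (abs_nonneg _)
    have hF0 : ∀ t, 0 ≤ F t := by
      intro t
      refine le_csInf (hne' t) ?_
      rintro y ⟨x, -, rfl⟩
      exact add_nonneg (hg0 x) (abs_nonneg _)
    have hFle : ∀ t (x : X), x ∈ (Vᶜ : Set X) → F t ≤ h t x := fun t x hx =>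
      csInf_le (hbdd t) ⟨x, hx, rfl⟩
    have hlip : LipschitzWith 1 F := by
      apply LipschitzWith.of_le_add
      intro t t'
      rw [← sub_le_iff_le_add]
      refine le_csInf (hne' t') ?_
      rintro y ⟨x, hx, rfl⟩
      have h1 : F t ≤ h t x := hFle t x hx
      have h2 : h t x ≤ h t' x + dist t t' := by
        have : |f x - t| ≤ |f x - t'| + |t' - t| := by
          calc |f x - t| = |(f x - t') + (t' - t)| := by ring_nf
          _ ≤ |f x - t'| + |t' - t| := abs_add_le _ _
        simp only [hh, Real.dist_eq]
        rw [abs_sub_comm t t']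
        linarith
      linarith
    refine ⟨fun t => min 1 (F t / 2), continuous_const.min (hlip.continuous.div_const 2)
      |>.continuousOn, ?_, ?_, ?_⟩
    · intro s hs
      constructor
      · exact le_min zero_le_one (by linarith [hF0 s])
      · exact min_le_left _ _
    · intro s _ hs
      -- positivity: the infimum is attained and must be positive
      obtain ⟨x0, hx0C, hmin⟩ := hCc.exists_isMinOn hC
        ((hgc.add ((hfc.sub continuous_const).abs)).continuousOn)
      have hFs : F s = h s x0 := by
        refine le_antisymm (hFle s x0 hx0C) ?_
        refine le_csInf (hne' s) ?_
        rintro y ⟨x, hx, rfl⟩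
        exact hmin hx
      have hpos : 0 < h s x0 := by
        rcases (add_nonneg (hg0 x0) (abs_nonneg (f x0 - s))).lt_or_eq with hlt | heq
        · exact hlt
        · exfalso
          have hg0' : g x0 = 0 := by
            linarith [abs_nonneg (f x0 - s), hg0 x0, heq]
          have hf0' : f x0 = s := by
            have habs : |f x0 - s| = 0 := by
              linarith [abs_nonneg (f x0 - s), hg0 x0, heq]
            have := abs_eq_zero.mp habs
            linarith
          have : 0 < g x0 := hkey x0 hx0C (hf0' ▸ hs)
          rw [hg0'] at this
          exact lt_irrefl 0 this
      have : 0 < F s := hFs ▸ hpos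
      exact lt_min one_pos (by linarith)
    · intro x hfx hgx
      by_cases hxV : x ∈ V
      · exact hVU hxV
      · exfalso
        have hxC : x ∈ (Vᶜ : Set X) := hxV
        have h1 : F (f x) ≤ g x := by
          have := hFle (f x) x hxC
          simpa [hh] using this
        have h2 : g x ≤ F (f x) / 2 :=
          le_trans hgx (min_le_right _ _)
        have h3 : 0 < g x := hkey x hxV hfx
        linarith
  · -- V = univ
    have hall : ∀ x : X, x ∈ V := by
      intro x
      by_contra hx
      exact hC ⟨x, hx⟩
    exact ⟨fun _ => 1, continuousOn_const,
      fun s _ => ⟨zero_le_one, le_refl 1⟩,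
      fun s _ _ => one_pos,
      fun x _ _ => hVU (hall x)⟩

end
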